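/- Let f : ℝ^d × ℝ^n → ℝ^d be L-Lipschitz in the state and odd in the action, let a : [0,2] → ℝ^n satisfy a(1+t) = -a(1-t) for all t ∈ [0,1], and let x : [0,2] → ℝ^d be differentiable with x'(t) = f(x(t), a(t)). Define d(t) := x(1+t) - x(1-t) for t ∈ [0,1]. Then d(0) = 0, d is differentiable with d'(t) = f(x(1-t), a(1-t)) - f(x(1+t), a(1-t)), and consequently ‖d'(t)‖ ≤ L‖d(t)‖ for all t ∈ [0,1]. -/

import Mathlib

open Set

/-- The deviation `d t = x (1+t) - x (1-t)` of a reversed trajectory satisfies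
`d 0 = 0`, has derivative `d' t = f (x (1-t), a (1-t)) - f (x (1+t), a (1-t))`,
and consequently `‖d' t‖ ≤ L * ‖d t‖` on `[0,1]`. -/
theorem reversal_deviation_derivative
    {d n : ℕ} (f : EuclideanSpace ℝ (Fin d) × EuclideanSpace ℝ (Fin n) → EuclideanSpace ℝ (Fin d))
    (L : ℝ)
    (hf_lip : ∀ (x x' : EuclideanSpace ℝ (Fin d)) (a : EuclideanSpace ℝ (Fin n)),
      ‖f (x, a) - f (x', a)‖ ≤ L * ‖x - x'‖)
    (hf_odd : ∀ (x : EuclideanSpace ℝ (Fin d)) (a : EuclideanSpace ℝ (Fin n)),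
      f (x, -a) = -f (x, a))
    (a : ℝ → EuclideanSpace ℝ (Fin n))
    (ha_rev : ∀ t ∈ Icc (0:ℝ) 1, a (1 + t) = -a (1 - t))
    (x : ℝ → EuclideanSpace ℝ (Fin d))
    (hx : ∀ t ∈ Icc (0:ℝ) 2, HasDerivAt x (f (x t, a t)) t)
    (dev : ℝ → EuclideanSpace ℝ (Fin d))
    (hdev : dev = fun t => x (1 + t) - x (1 - t)) :
    dev 0 = 0 ∧
    (∀ t ∈ Icc (0:ℝ) 1,
      HasDerivAt dev (f (x (1 - t), a (1 - t)) - f (x (1 + t), a (1 - t))) t) ∧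
    (∀ t ∈ Icc (0:ℝ) 1,
      ‖f (x (1 - t), a (1 - t)) - f (x (1 + t), a (1 - t))‖ ≤ L * ‖dev t‖) := by
  subst hdev
  refine ⟨by simp, ?_, ?_⟩
  · intro t ht
    obtain ⟨ht0, ht1⟩ := ht
    have h1 : (1:ℝ) + t ∈ Icc (0:ℝ) 2 := ⟨by linarith, by linarith⟩
    have h2 : (1:ℝ) - t ∈ Icc (0:ℝ) 2 := ⟨by linarith, by linarith⟩
    have d1 : HasDerivAt (fun s => x (1 + s)) (f (x (1 + t), a (1 + t))) t := by
      have hi1 : HasDerivAt (fun s : ℝ => 1 + s) 1 t := by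
        simpa using (hasDerivAt_id t).const_add 1
      have := HasDerivAt.scomp t (hx _ h1) hi1
      simpa [Function.comp_def] using this
    have d2 : HasDerivAt (fun s => x (1 - s)) (-f (x (1 - t), a (1 - t))) t := by
      have hi2 : HasDerivAt (fun s : ℝ => 1 - s) (-1) t := by
        simpa using (hasDerivAt_id t).const_sub 1
      have := HasDerivAt.scomp t (hx _ h2) hi2
      simpa [Function.comp_def] using this
    have := d1.sub d2
    have hodd : f (x (1 + t), a (1 + t)) = -f (x (1 + t), a (1 - t)) := by
      rw [ha_rev t ⟨ht0, ht1⟩, hf_odd]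
    rw [hodd] at this
    rw [show f (x (1 - t), a (1 - t)) - f (x (1 + t), a (1 - t)) = -f (x (1 + t), a (1 - t)) - -f (x (1 - t), a (1 - t)) by abel]
    exact this
  · intro t ht
    have := hf_lip (x (1 - t)) (x (1 + t)) (a (1 - t))
    calc ‖f (x (1 - t), a (1 - t)) - f (x (1 + t), a (1 - t))‖
        ≤ L * ‖x (1 - t) - x (1 + t)‖ := this
      _ = L * ‖x (1 + t) - x (1 - t)‖ := by rw [norm_sub_rev]
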